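/- Let S = UΛUᵀ with UᵀU = I_m and ρ > 0. Then (2⁻¹S⊗I_p + 2⁻¹I_p⊗S + ρI_{p²})·{−ρ⁻¹(UΛ₂Uᵀ)⊗I_p} = −(2ρ)⁻¹(UΛUᵀ)⊗I_p − (2ρ)⁻¹(U⊗U)(Λ₂⊗Λ)(Uᵀ⊗Uᵀ). -/

import Mathlib

open Matrix Kronecker

/-- With `S = U Λ Uᵀ`, `Uᵀ U = I_m`, `ρ > 0`,
`(2⁻¹ S⊗I + 2⁻¹ I⊗S + ρI)·{−ρ⁻¹ (UΛ₂Uᵀ)⊗I}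
 = −(2ρ)⁻¹ (UΛUᵀ)⊗I − (2ρ)⁻¹ (U⊗U)(Λ₂⊗Λ)(Uᵀ⊗Uᵀ)`. -/
theorem stmt_7 (p m : ℕ) (hp : 0 < p) (hm : 0 < m)
    (U : Matrix (Fin p) (Fin m) ℝ) (hU : Uᵀ * U = 1)
    (τ : Fin m → ℝ) (hτ : ∀ i, 0 ≤ τ i)
    (Λ : Matrix (Fin m) (Fin m) ℝ) (hΛ : Λ = Matrix.diagonal τ)
    (S : Matrix (Fin p) (Fin p) ℝ) (hS : S = U * Λ * Uᵀ)
    (ρ : ℝ) (hρ : 0 < ρ)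
    (Λ₂ : Matrix (Fin m) (Fin m) ℝ)
    (hΛ₂ : Λ₂ = Matrix.diagonal (fun i => τ i / (τ i + 2 * ρ))) :
    ((2⁻¹ : ℝ) • (S ⊗ₖ (1 : Matrix (Fin p) (Fin p) ℝ))
        + (2⁻¹ : ℝ) • ((1 : Matrix (Fin p) (Fin p) ℝ) ⊗ₖ S)
        + ρ • (1 : Matrix (Fin p × Fin p) (Fin p × Fin p) ℝ))
      * (-(ρ⁻¹ • ((U * Λ₂ * Uᵀ) ⊗ₖ (1 : Matrix (Fin p) (Fin p) ℝ))))
    = -((2 * ρ)⁻¹ • ((U * Λ * Uᵀ) ⊗ₖ (1 : Matrix (Fin p) (Fin p) ℝ)))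
      - (2 * ρ)⁻¹ • ((U ⊗ₖ U) * (Λ₂ ⊗ₖ Λ) * (Uᵀ ⊗ₖ Uᵀ)) := by
  have hdiag : Λ * Λ₂ + (2 * ρ) • Λ₂ = Λ := by
    subst hΛ hΛ₂
    rw [Matrix.diagonal_mul_diagonal, ← Matrix.diagonal_smul, Matrix.diagonal_add]
    refine congrArg _ (funext fun i => ?_)
    have hne : τ i + 2 * ρ ≠ 0 := by nlinarith [hτ i]
    simp only [Pi.add_apply, Pi.smul_apply, smul_eq_mul]
    field_simp
  have hmul : (U * Λ * Uᵀ) * (U * Λ₂ * Uᵀ) = U * (Λ * Λ₂) * Uᵀ := by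
    calc (U * Λ * Uᵀ) * (U * Λ₂ * Uᵀ) = U * Λ * (Uᵀ * U) * (Λ₂ * Uᵀ) := by
          simp only [Matrix.mul_assoc]
      _ = U * (Λ * Λ₂) * Uᵀ := by rw [hU]; simp only [Matrix.mul_one, Matrix.mul_assoc]
  have hkey : (U * Λ * Uᵀ) * (U * Λ₂ * Uᵀ) = U * Λ * Uᵀ + (-(2 * ρ)) • (U * Λ₂ * Uᵀ) := by
    rw [hmul]
    have : U * (Λ * Λ₂ + (2 * ρ) • Λ₂) * Uᵀ = U * Λ * Uᵀ := by rw [hdiag]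
    rw [Matrix.mul_add, Matrix.add_mul, Matrix.mul_smul, Matrix.smul_mul] at this
    linear_combination (norm := module) this
  have hBA : (U ⊗ₖ U) * (Λ₂ ⊗ₖ Λ) * (Uᵀ ⊗ₖ Uᵀ) = (U * Λ₂ * Uᵀ) ⊗ₖ (U * Λ * Uᵀ) := by
    rw [← Matrix.mul_kronecker_mul, ← Matrix.mul_kronecker_mul]
  rw [hBA, hS]
  simp only [mul_neg, Matrix.add_mul, Matrix.smul_mul, Matrix.mul_smul,
    ← Matrix.mul_kronecker_mul, Matrix.one_mul, Matrix.mul_one, mul_one, one_mul]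
  rw [hkey, Matrix.add_kronecker, Matrix.smul_kronecker]
  match_scalars <;> field_simp <;> ring
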